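/- A standard interference function m has at most one fixed point: if P = m(P) and P' = m(P') with P, P' ≥ 0, then P = P'. -/
import Mathlib

lemma standard_interference_le {K : ℕ}
    (m : (Fin K → ℝ) → (Fin K → ℝ))
    (hpos : ∀ P : Fin K → ℝ, (∀ i, 0 ≤ P i) → ∀ i, 0 < m P i)
    (hmono : ∀ P P' : Fin K → ℝ, (∀ i, 0 ≤ P i) → (∀ i, 0 ≤ P' i) →
      (∀ i, P i ≤ P' i) → ∀ i, m P i ≤ m P' i)
    (hscal : ∀ P : Fin K → ℝ, (∀ i, 0 ≤ P i) → ∀ α : ℝ, 1 < α →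
      ∀ i, m (fun j => α * P j) i < α * m P i)
    (P P' : Fin K → ℝ)
    (hP : ∀ i, 0 ≤ P i) (hP' : ∀ i, 0 ≤ P' i)
    (hfix : m P = P) (hfix' : m P' = P') :
    ∀ i, P i ≤ P' i := by
  by_contra h
  push_neg at h
  obtain ⟨j, hj⟩ := h
  have hP'pos : ∀ i, 0 < P' i := fun i => hfix' ▸ hpos P' hP' i
  obtain ⟨i0, _, hi0⟩ := Finset.exists_max_image (Finset.univ : Finset (Fin K))
    (fun i => P i / P' i) ⟨j, Finset.mem_univ j⟩
  set α := P i0 / P' i0 with hαdef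
  have hα : 1 < α := lt_of_lt_of_le ((one_lt_div (hP'pos j)).mpr hj)
    (hi0 j (Finset.mem_univ j))
  have hle : ∀ i, P i ≤ α * P' i := fun i =>
    (div_le_iff₀ (hP'pos i)).mp (hi0 i (Finset.mem_univ i))
  have hnn : ∀ i, 0 ≤ α * P' i := fun i =>
    mul_nonneg (le_of_lt (lt_trans one_pos hα)) (hP' i)
  have hstrict : ∀ i, P i < α * P' i := by
    intro i
    calc P i = m P i := by rw [hfix]
      _ ≤ m (fun k => α * P' k) i := hmono P _ hP hnn hle i
      _ < α * m P' i := hscal P' hP' α hα i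
      _ = α * P' i := by rw [hfix']
  have heq : P i0 = α * P' i0 := by
    rw [hαdef, div_mul_cancel₀ _ (ne_of_gt (hP'pos i0))]
  exact absurd heq (ne_of_lt (hstrict i0))

theorem standard_interference_fixed_point_unique {K : ℕ}
    (m : (Fin K → ℝ) → (Fin K → ℝ))
    (hpos : ∀ P : Fin K → ℝ, (∀ i, 0 ≤ P i) → ∀ i, 0 < m P i)
    (hmono : ∀ P P' : Fin K → ℝ, (∀ i, 0 ≤ P i) → (∀ i, 0 ≤ P' i) →
      (∀ i, P i ≤ P' i) → ∀ i, m P i ≤ m P' i)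
    (hscal : ∀ P : Fin K → ℝ, (∀ i, 0 ≤ P i) → ∀ α : ℝ, 1 < α →
      ∀ i, m (fun j => α * P j) i < α * m P i)
    (P P' : Fin K → ℝ)
    (hP : ∀ i, 0 ≤ P i) (hP' : ∀ i, 0 ≤ P' i)
    (hfix : m P = P) (hfix' : m P' = P') :
    P = P' := by
  funext i
  exact le_antisymm
    (standard_interference_le m hpos hmono hscal P P' hP hP' hfix hfix' i)
    (standard_interference_le m hpos hmono hscal P' P hP' hP hfix' hfix i)
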